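/- Let n ≥ 4 be even and let P_n be the path graph on vertices 1,…,n with edges {i,i+1}. Then Σ_{σ ∈ Aut(P_n)} Σ_{μ matching of P_n with σ(μ)=μ} w^μ(σ) = a_1^n·U_n(b_1,β_1) + a_2^{n/2}·(γ_1·U_{n/2}(b_2,β_2) + c_1·β_2·U_{(n−2)/2}(b_2,β_2)), where U_m(Y,Z) evaluated at ring elements Y, Z denotes Σ_{μ matching of P_m} Y^{|μ|} Z^{(m−1)−|μ|}. -/
import Mathlib


open scoped Classical

noncomputable section

/-- Variables of the extended Walsh cycle index ring:
`a k`, `b k`, `c k`, `β k`, `γ k` for `k ≥ 1`. -/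
inductive WVar : Type
  | a : ℕ → WVar
  | b : ℕ → WVar
  | c : ℕ → WVar
  | beta : ℕ → WVar
  | gamma : ℕ → WVar

/-- The extended Walsh cycle index ring `ℚ[a;b;c;β;γ]`. -/
abbrev WRing : Type := MvPolynomial WVar ℚ

/-- The variable `a_k`. -/
def va (k : ℕ) : WRing := MvPolynomial.X (WVar.a k)
/-- The variable `b_k`. -/
def vb (k : ℕ) : WRing := MvPolynomial.X (WVar.b k)
/-- The variable `c_k`. -/
def vc (k : ℕ) : WRing := MvPolynomial.X (WVar.c k)
/-- The variable `β_k`. -/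
def vbeta (k : ℕ) : WRing := MvPolynomial.X (WVar.beta k)
/-- The variable `γ_k`. -/
def vgamma (k : ℕ) : WRing := MvPolynomial.X (WVar.gamma k)

/-- The path graph `P_n` on `Fin n`, edges `{i, i+1}`. -/
def pathG (n : ℕ) : SimpleGraph (Fin n) :=
  SimpleGraph.fromRel (fun i j => (i : ℕ) + 1 = (j : ℕ))

/-- The cycle graph `C_n` on `Fin n`, edges `{i, i+1 mod n}`. -/
def cycG (n : ℕ) : SimpleGraph (Fin n) :=
  SimpleGraph.fromRel (fun i j => ((i : ℕ) + 1) % n = (j : ℕ))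

/-- The matchings of a graph `G`: finsets of pairwise disjoint edges of `G`. -/
def matchings {V : Type*} [Fintype V] (G : SimpleGraph V) : Finset (Finset (Sym2 V)) :=
  Finset.univ.filter (fun μ =>
    (↑μ : Set (Sym2 V)) ⊆ G.edgeSet ∧
    ∀ e ∈ μ, ∀ f ∈ μ, e ≠ f → ∀ v : V, v ∈ e → v ∉ f)

/-- `U_m(Y,Z) = Σ_{μ matching of P_m} Y^{|μ|} Z^{(m-1)-|μ|}`. -/
def Upoly {S : Type*} [CommSemiring S] (m : ℕ) (Y Z : S) : S :=
  ∑ μ ∈ matchings (pathG m), Y ^ μ.card * Z ^ ((m - 1) - μ.card)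

/-- `T_m(Y,Z) = Σ_{μ matching of C_m} Y^{|μ|} Z^{m-|μ|}` for `m ≥ 3`, with the
conventions `T_1(Y,Z) = Z` and `T_2(Y,Z) = 2YZ + Z²`. -/
def Tpoly {S : Type*} [CommSemiring S] (m : ℕ) (Y Z : S) : S :=
  if m = 1 then Z
  else if m = 2 then 2 * Y * Z + Z ^ 2
  else ∑ μ ∈ matchings (cycG m), Y ^ μ.card * Z ^ (m - μ.card)

/-- The permutation induced by `σ` on unordered pairs. -/
def edgePerm {V : Type*} (σ : Equiv.Perm V) : Equiv.Perm (Sym2 V) where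
  toFun := Sym2.map σ
  invFun := Sym2.map σ.symm
  left_inv := by intro e; induction e using Sym2.ind with | _ x y => simp
  right_inv := by intro e; induction e using Sym2.ind with | _ x y => simp

/-- The size of the cycle (orbit) of `σ` through the vertex `v`. -/
def orbSize {V : Type*} [Fintype V] (σ : Equiv.Perm V) (v : V) : ℕ :=
  (Finset.univ.filter fun u => σ.SameCycle v u).card

/-- `σ_k`: the number of `k`-cycles of `σ` on the vertices. -/
def vcyc {V : Type*} [Fintype V] (σ : Equiv.Perm V) (k : ℕ) : ℕ :=
  (Finset.univ.filter fun v => orbSize σ v = k).card / k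

/-- The length of the cycle of the induced edge permutation through `e`. -/
def eOrbLen {V : Type*} [Fintype V] (σ : Equiv.Perm V) (e : Sym2 V) : ℕ :=
  (Finset.univ.filter fun f => (edgePerm σ).SameCycle e f).card

/-- The edge cycle through `e` (of length `l = eOrbLen σ e`) is cylindrical:
`σ^l` fixes both endpoints of every edge of the cycle. -/
def IsCylE {V : Type*} [Fintype V] (σ : Equiv.Perm V) (e : Sym2 V) : Prop :=
  ∀ f : Sym2 V, (edgePerm σ).SameCycle e f → ∀ u v : V, f = s(u, v) →
    (σ ^ eOrbLen σ e) u = u ∧ (σ ^ eOrbLen σ e) v = v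

/-- The edge cycle through `e` (of length `l = eOrbLen σ e`) is Möbius:
`σ^l` exchanges the endpoints of every edge of the cycle. -/
def IsMobE {V : Type*} [Fintype V] (σ : Equiv.Perm V) (e : Sym2 V) : Prop :=
  ∀ f : Sym2 V, (edgePerm σ).SameCycle e f → ∀ u v : V, f = s(u, v) →
    u ≠ v ∧ (σ ^ eOrbLen σ e) u = v ∧ (σ ^ eOrbLen σ e) v = u

/-- The edge set of `G` as a finset. -/
def eFin {V : Type*} [Fintype V] (G : SimpleGraph V) : Finset (Sym2 V) :=
  G.edgeFinset

/-- `cyl_{k,Y}(σ)`: the number of cylindrical edge cycles of length `k` of sort `Y`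
(consisting of edges of the matching `μ`). -/
def cylCntY {V : Type*} [Fintype V] (G : SimpleGraph V) (μ : Finset (Sym2 V))
    (σ : Equiv.Perm V) (k : ℕ) : ℕ :=
  ((eFin G).filter fun e => e ∈ μ ∧ eOrbLen σ e = k ∧ IsCylE σ e).card / k

/-- `möb_{k,Y}(σ)`: the number of Möbius edge cycles of length `k` of sort `Y`. -/
def mobCntY {V : Type*} [Fintype V] (G : SimpleGraph V) (μ : Finset (Sym2 V))
    (σ : Equiv.Perm V) (k : ℕ) : ℕ :=
  ((eFin G).filter fun e => e ∈ μ ∧ eOrbLen σ e = k ∧ IsMobE σ e).card / k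

/-- `cyl_{k,Z}(σ)`: the number of cylindrical edge cycles of length `k` of sort `Z`
(consisting of edges not in the matching `μ`). -/
def cylCntZ {V : Type*} [Fintype V] (G : SimpleGraph V) (μ : Finset (Sym2 V))
    (σ : Equiv.Perm V) (k : ℕ) : ℕ :=
  ((eFin G).filter fun e => e ∉ μ ∧ eOrbLen σ e = k ∧ IsCylE σ e).card / k

/-- `möb_{k,Z}(σ)`: the number of Möbius edge cycles of length `k` of sort `Z`. -/
def mobCntZ {V : Type*} [Fintype V] (G : SimpleGraph V) (μ : Finset (Sym2 V))
    (σ : Equiv.Perm V) (k : ℕ) : ℕ :=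
  ((eFin G).filter fun e => e ∉ μ ∧ eOrbLen σ e = k ∧ IsMobE σ e).card / k

/-- The extended cycle index monomial `w^μ(σ)` of a matched graph `(G,μ)` with an
automorphism `σ` fixing `μ`. -/
def wM {V : Type*} [Fintype V] (G : SimpleGraph V) (μ : Finset (Sym2 V))
    (σ : Equiv.Perm V) : WRing :=
  (∏ k ∈ Finset.range (Fintype.card V * Fintype.card V + 2), va k ^ vcyc σ k) *
  (∏ k ∈ Finset.range (Fintype.card V * Fintype.card V + 2), vb k ^ cylCntY G μ σ k) *
  (∏ k ∈ Finset.range (Fintype.card V * Fintype.card V + 2), vc k ^ mobCntY G μ σ k) *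
  (∏ k ∈ Finset.range (Fintype.card V * Fintype.card V + 2), vbeta k ^ cylCntZ G μ σ k) *
  (∏ k ∈ Finset.range (Fintype.card V * Fintype.card V + 2), vgamma k ^ mobCntZ G μ σ k)

/-- The automorphisms of `G`, as a finset of permutations of the vertices. -/
def autF {V : Type*} [Fintype V] (G : SimpleGraph V) : Finset (Equiv.Perm V) :=
  Finset.univ.filter fun σ => ∀ u v : V, G.Adj (σ u) (σ v) ↔ G.Adj u v

/-- The matchings of `G` fixed by the automorphism `σ` (i.e. `σ(μ) = μ`). -/
def fixedMatchings {V : Type*} [Fintype V] (G : SimpleGraph V) (σ : Equiv.Perm V) :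
    Finset (Finset (Sym2 V)) :=
  (matchings G).filter fun μ => μ.image (Sym2.map σ) = μ

section PathBasics

variable {n : ℕ}

lemma pathG_adj {u v : Fin n} :
    (pathG n).Adj u v ↔ u ≠ v ∧ ((u:ℕ)+1 = v ∨ (v:ℕ)+1 = u) := by
  simp [pathG, SimpleGraph.fromRel_adj]

/-- The `i`-th edge of the path graph. -/
def pedge (n : ℕ) (i : Fin (n-1)) : Sym2 (Fin n) :=
  s(⟨i.val, by omega⟩, ⟨i.val+1, by have := i.isLt; omega⟩)

lemma pedge_inj : Function.Injective (pedge n) := by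
  intro i j h
  rw [pedge, pedge, Sym2.eq_iff] at h
  apply Fin.ext
  rcases h with ⟨h1, h2⟩ | ⟨h1, h2⟩
  · have := congrArg Fin.val h1
    simpa using this
  · have e1 := congrArg Fin.val h1
    have e2 := congrArg Fin.val h2
    simp at e1 e2
    omega

lemma mem_edgeSet_pathG {e : Sym2 (Fin n)} :
    e ∈ (pathG n).edgeSet ↔ ∃ i : Fin (n-1), e = pedge n i := by
  constructor
  · intro he
    induction e using Sym2.ind with
    | _ u v =>
      rw [SimpleGraph.mem_edgeSet, pathG_adj] at he
      obtain ⟨hne, h | h⟩ := he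
      · refine ⟨⟨u, by have := v.isLt; omega⟩, ?_⟩
        exact congrArg₂ (fun a b => s(a, b)) (Fin.ext rfl) (Fin.ext h.symm)
      · refine ⟨⟨v, by have := u.isLt; omega⟩, ?_⟩
        rw [Sym2.eq_swap]
        exact congrArg₂ (fun a b => s(a, b)) (Fin.ext rfl) (Fin.ext h.symm)
  · rintro ⟨i, rfl⟩
    rw [pedge, SimpleGraph.mem_edgeSet, pathG_adj]
    refine ⟨?_, Or.inl rfl⟩
    intro h
    have := congrArg Fin.val h
    simp at this

lemma mem_eFin_pathG {e : Sym2 (Fin n)} :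
    e ∈ eFin (pathG n) ↔ ∃ i : Fin (n-1), e = pedge n i := by
  rw [eFin, SimpleGraph.mem_edgeFinset]
  exact mem_edgeSet_pathG

lemma eFin_pathG_eq : eFin (pathG n) = Finset.univ.image (pedge n) := by
  ext e
  simp [mem_eFin_pathG, eq_comm]

lemma card_eFin_pathG : (eFin (pathG n)).card = n - 1 := by
  rw [eFin_pathG_eq, Finset.card_image_of_injective _ pedge_inj, Finset.card_univ,
    Fintype.card_fin]

end PathBasics
section Aut

variable {n : ℕ}

lemma mem_autF_iff {V : Type*} [Fintype V] {G : SimpleGraph V} {σ : Equiv.Perm V} :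
    σ ∈ autF G ↔ ∀ u v : V, G.Adj (σ u) (σ v) ↔ G.Adj u v := by
  simp only [autF, Finset.mem_filter, Finset.mem_univ, true_and]

lemma adj_zero {v : Fin n} (hn : 2 ≤ n) :
    (pathG n).Adj v ⟨0, by omega⟩ ↔ (v : ℕ) = 1 := by
  rw [pathG_adj]
  constructor
  · rintro ⟨h1, h2 | h2⟩ <;> simp at h2 <;> omega
  · intro h
    refine ⟨?_, Or.inr (by simp [h])⟩
    rintro rfl
    simp at h

lemma aut_adj_iff {σ : Equiv.Perm (Fin n)} (hσ : σ ∈ autF (pathG n)) :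
    ∀ u v, (pathG n).Adj (σ u) (σ v) ↔ (pathG n).Adj u v :=
  mem_autF_iff.mp hσ

lemma revPerm_mem_autF : (Fin.revPerm : Equiv.Perm (Fin n)) ∈ autF (pathG n) := by
  rw [mem_autF_iff]
  intro u v
  have hu := u.isLt; have hv := v.isLt
  simp only [Fin.revPerm_apply, pathG_adj, ne_eq, Fin.ext_iff, Fin.val_rev]
  constructor <;> rintro ⟨h1, h2 | h2⟩ <;>
    first
      | exact ⟨by omega, Or.inl (by omega)⟩
      | exact ⟨by omega, Or.inr (by omega)⟩

lemma one_mem_autF {V : Type*} [Fintype V] (G : SimpleGraph V) :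
    (1 : Equiv.Perm V) ∈ autF G := by
  rw [mem_autF_iff]; intro u v; simp

lemma revPerm_mul_revPerm : (Fin.revPerm * Fin.revPerm : Equiv.Perm (Fin n)) = 1 := by
  ext v
  simp

lemma aut_eq_one_of_fix (hn : 2 ≤ n) (σ : Equiv.Perm (Fin n))
    (hσ : σ ∈ autF (pathG n)) (h0 : σ ⟨0, by omega⟩ = ⟨0, by omega⟩) : σ = 1 := by
  have hadj := aut_adj_iff hσ
  have key : ∀ i, ∀ h : i < n, σ ⟨i, h⟩ = ⟨i, h⟩ := by
    intro i
    induction i using Nat.strong_induction_on with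
    | _ i ih =>
      intro h
      match i, h with
      | 0, h => exact h0
      | 1, h =>
        have ha : (pathG n).Adj (σ ⟨1, h⟩) (σ ⟨0, by omega⟩) := by
          rw [hadj, pathG_adj]
          exact ⟨by simp [Fin.ext_iff], Or.inr rfl⟩
        rw [h0, adj_zero hn] at ha
        exact Fin.ext ha
      | (j+2), h =>
        have hj1 : j + 1 < n := by omega
        have hj : j < n := by omega
        have ha : (pathG n).Adj (σ ⟨j+2, h⟩) (σ ⟨j+1, hj1⟩) := by
          rw [hadj, pathG_adj]
          exact ⟨by simp [Fin.ext_iff], Or.inr rfl⟩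
        rw [ih (j+1) (by omega) hj1, pathG_adj] at ha
        obtain ⟨h1, h2 | h2⟩ := ha
        · exfalso
          have heq : σ ⟨j+2, h⟩ = σ ⟨j, hj⟩ := by
            rw [ih j (by omega) hj]
            exact Fin.ext (by simp at h2 ⊢; omega)
          have := σ.injective heq
          rw [Fin.ext_iff] at this
          simp at this
        · exact Fin.ext (by simp at h2 ⊢; omega)
  apply Equiv.ext
  intro v
  have := key v.val v.isLt
  simpa using this

lemma autF_pathG (hn : 2 ≤ n) : autF (pathG n) = {1, Fin.revPerm} := by
  apply Finset.Subset.antisymm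
  · intro σ hσ
    have hadj := aut_adj_iff hσ
    simp only [Finset.mem_insert, Finset.mem_singleton]
    have h0 : (σ ⟨0, by omega⟩ : Fin n).val = 0 ∨ (σ ⟨0, by omega⟩ : Fin n).val = n - 1 := by
      by_contra hc
      push_neg at hc
      obtain ⟨hc0, hc1⟩ := hc
      set x : Fin n := σ ⟨0, by omega⟩ with hx
      have hxlt := x.isLt
      have hu1 : (x : ℕ) - 1 < n := by omega
      have hu2 : (x : ℕ) + 1 < n := by omega
      set u : Fin n := σ.symm ⟨(x:ℕ) - 1, hu1⟩ with hu
      set w : Fin n := σ.symm ⟨(x:ℕ) + 1, hu2⟩ with hw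
      have hau : (pathG n).Adj u ⟨0, by omega⟩ := by
        rw [← hadj, Equiv.apply_symm_apply, ← hx, pathG_adj]
        refine ⟨fun he => ?_, Or.inl (by simp; omega)⟩
        have := congrArg Fin.val he
        simp at this
        omega
      have haw : (pathG n).Adj w ⟨0, by omega⟩ := by
        rw [← hadj, Equiv.apply_symm_apply, ← hx, pathG_adj]
        refine ⟨fun he => ?_, Or.inr (by simp)⟩
        have := congrArg Fin.val he
        simp at this
      rw [adj_zero hn] at hau haw
      have huw : u = w := Fin.ext (by rw [hau, haw])
      have := congrArg σ huw
      rw [hu, hw, Equiv.apply_symm_apply, Equiv.apply_symm_apply, Fin.ext_iff] at this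
      simp at this
    rcases h0 with h0 | h0
    · left
      exact aut_eq_one_of_fix hn σ hσ (Fin.ext h0)
    · right
      have hrs : (Fin.revPerm * σ : Equiv.Perm (Fin n)) ∈ autF (pathG n) := by
        rw [mem_autF_iff]
        intro u v
        rw [Equiv.Perm.mul_apply, Equiv.Perm.mul_apply]
        rw [aut_adj_iff revPerm_mem_autF, hadj]
      have h00 : (Fin.revPerm * σ : Equiv.Perm (Fin n)) ⟨0, by omega⟩ = ⟨0, by omega⟩ := by
        rw [Equiv.Perm.mul_apply]
        apply Fin.ext
        simp [Fin.val_rev]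
        omega
      have h1 := aut_eq_one_of_fix hn _ hrs h00
      have h2 : (Fin.revPerm * σ : Equiv.Perm (Fin n)) = Fin.revPerm * Fin.revPerm :=
        h1.trans revPerm_mul_revPerm.symm
      exact mul_left_cancel h2
  · intro σ hσ
    simp only [Finset.mem_insert, Finset.mem_singleton] at hσ
    rcases hσ with rfl | rfl
    · exact one_mem_autF _
    · exact revPerm_mem_autF

end Aut
section IdentityComp

variable {V : Type*} [Fintype V]

lemma prod_pow_single (x : ℕ → WRing) (N : ℕ) (f : ℕ → ℕ) (k0 : ℕ) (hk : k0 < N)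
    (hf : ∀ k, k ≠ k0 → f k = 0) :
    ∏ k ∈ Finset.range N, x k ^ f k = x k0 ^ f k0 := by
  apply Finset.prod_eq_single_of_mem k0 (Finset.mem_range.mpr hk)
  intro b _ hb
  rw [hf b hb, pow_zero]

lemma prod_pow_zero (x : ℕ → WRing) (N : ℕ) (f : ℕ → ℕ) (hf : ∀ k, f k = 0) :
    ∏ k ∈ Finset.range N, x k ^ f k = 1 := by
  apply Finset.prod_eq_one
  intro b _
  rw [hf b, pow_zero]

lemma matchings_sub {G : SimpleGraph V} {μ : Finset (Sym2 V)} (hμ : μ ∈ matchings G) :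
    μ ⊆ eFin G := by
  intro e he
  rw [eFin, SimpleGraph.mem_edgeFinset]
  exact (Finset.mem_filter.mp hμ).2.1 he

lemma matchings_disj {G : SimpleGraph V} {μ : Finset (Sym2 V)} (hμ : μ ∈ matchings G) :
    ∀ e ∈ μ, ∀ f ∈ μ, e ≠ f → ∀ v : V, v ∈ e → v ∉ f :=
  (Finset.mem_filter.mp hμ).2.2

lemma mem_matchings_iff {G : SimpleGraph V} {μ : Finset (Sym2 V)} :
    μ ∈ matchings G ↔ (↑μ : Set (Sym2 V)) ⊆ G.edgeSet ∧
      ∀ e ∈ μ, ∀ f ∈ μ, e ≠ f → ∀ v : V, v ∈ e → v ∉ f := by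
  simp only [matchings, Finset.mem_filter, Finset.mem_univ, true_and]

lemma orbSize_one (v : V) : orbSize (1 : Equiv.Perm V) v = 1 := by
  rw [orbSize]
  rw [Finset.card_eq_one]
  refine ⟨v, ?_⟩
  ext u
  simp [Equiv.Perm.sameCycle_one, eq_comm]

lemma vcyc_one (k : ℕ) : vcyc (1 : Equiv.Perm V) k = if k = 1 then Fintype.card V else 0 := by
  rw [vcyc]
  split_ifs with h
  · subst h
    have : (Finset.univ.filter fun v : V => orbSize (1 : Equiv.Perm V) v = 1) = Finset.univ := by
      ext v; simp [orbSize_one]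
    rw [this, Finset.card_univ, Nat.div_one]
  · have : (Finset.univ.filter fun v : V => orbSize (1 : Equiv.Perm V) v = k) = ∅ := by
      ext v
      simp only [Finset.mem_filter, Finset.mem_univ, true_and, orbSize_one,
        Finset.notMem_empty, iff_false]
      omega
    rw [this, Finset.card_empty, Nat.zero_div]

lemma edgePerm_one : edgePerm (1 : Equiv.Perm V) = 1 := by
  apply Equiv.ext
  intro e
  induction e using Sym2.ind with
  | _ u v => simp [edgePerm]

lemma eOrbLen_one (e : Sym2 V) : eOrbLen (1 : Equiv.Perm V) e = 1 := by
  rw [eOrbLen, edgePerm_one, Finset.card_eq_one]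
  refine ⟨e, ?_⟩
  ext f
  simp [Equiv.Perm.sameCycle_one, eq_comm]

lemma isCylE_one (e : Sym2 V) : IsCylE (1 : Equiv.Perm V) e := by
  intro f _ u v _
  simp

lemma not_isMobE_one (e : Sym2 V) : ¬ IsMobE (1 : Equiv.Perm V) e := by
  intro h
  induction e using Sym2.ind with
  | _ u v =>
    obtain ⟨hne, h1, -⟩ := h s(u, v) (Equiv.Perm.SameCycle.refl _ _) u v rfl
    simp at h1
    exact hne h1

lemma cylCntY_one {G : SimpleGraph V} {μ : Finset (Sym2 V)} (hμ : μ ∈ matchings G) (k : ℕ) :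
    cylCntY G μ (1 : Equiv.Perm V) k = if k = 1 then μ.card else 0 := by
  rw [cylCntY]
  split_ifs with h
  · subst h
    have : ((eFin G).filter fun e => e ∈ μ ∧ eOrbLen (1 : Equiv.Perm V) e = 1 ∧
        IsCylE (1 : Equiv.Perm V) e) = μ := by
      ext e
      simp only [Finset.mem_filter, eOrbLen_one]
      constructor
      · tauto
      · intro he
        exact ⟨matchings_sub hμ he, he, by trivial, isCylE_one e⟩
    rw [this, Nat.div_one]
  · have : ((eFin G).filter fun e => e ∈ μ ∧ eOrbLen (1 : Equiv.Perm V) e = k ∧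
        IsCylE (1 : Equiv.Perm V) e) = ∅ := by
      ext e
      simp only [Finset.mem_filter, eOrbLen_one, Finset.notMem_empty, iff_false]
      rintro ⟨-, -, hk, -⟩
      exact h hk.symm
    rw [this, Finset.card_empty, Nat.zero_div]

lemma cylCntZ_one {G : SimpleGraph V} {μ : Finset (Sym2 V)} (hμ : μ ∈ matchings G) (k : ℕ) :
    cylCntZ G μ (1 : Equiv.Perm V) k = if k = 1 then (eFin G).card - μ.card else 0 := by
  rw [cylCntZ]
  split_ifs with h
  · subst h
    have : ((eFin G).filter fun e => e ∉ μ ∧ eOrbLen (1 : Equiv.Perm V) e = 1 ∧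
        IsCylE (1 : Equiv.Perm V) e) = eFin G \ μ := by
      ext e
      simp only [Finset.mem_filter, eOrbLen_one, Finset.mem_sdiff]
      constructor
      · tauto
      · rintro ⟨h1, h2⟩
        exact ⟨h1, h2, by trivial, isCylE_one e⟩
    rw [this, Nat.div_one, Finset.card_sdiff_of_subset (matchings_sub hμ)]
  · have : ((eFin G).filter fun e => e ∉ μ ∧ eOrbLen (1 : Equiv.Perm V) e = k ∧
        IsCylE (1 : Equiv.Perm V) e) = ∅ := by
      ext e
      simp only [Finset.mem_filter, eOrbLen_one, Finset.notMem_empty, iff_false]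
      rintro ⟨-, -, hk, -⟩
      exact h hk.symm
    rw [this, Finset.card_empty, Nat.zero_div]

lemma mobCntY_one {G : SimpleGraph V} (μ : Finset (Sym2 V)) (k : ℕ) :
    mobCntY G μ (1 : Equiv.Perm V) k = 0 := by
  rw [mobCntY]
  have : ((eFin G).filter fun e => e ∈ μ ∧ eOrbLen (1 : Equiv.Perm V) e = k ∧
      IsMobE (1 : Equiv.Perm V) e) = ∅ := by
    ext e
    simp only [Finset.mem_filter, Finset.notMem_empty, iff_false]
    rintro ⟨-, -, -, hm⟩
    exact not_isMobE_one e hm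
  rw [this, Finset.card_empty, Nat.zero_div]

lemma mobCntZ_one {G : SimpleGraph V} (μ : Finset (Sym2 V)) (k : ℕ) :
    mobCntZ G μ (1 : Equiv.Perm V) k = 0 := by
  rw [mobCntZ]
  have : ((eFin G).filter fun e => e ∉ μ ∧ eOrbLen (1 : Equiv.Perm V) e = k ∧
      IsMobE (1 : Equiv.Perm V) e) = ∅ := by
    ext e
    simp only [Finset.mem_filter, Finset.notMem_empty, iff_false]
    rintro ⟨-, -, -, hm⟩
    exact not_isMobE_one e hm
  rw [this, Finset.card_empty, Nat.zero_div]

lemma fixedMatchings_one (G : SimpleGraph V) : fixedMatchings G (1 : Equiv.Perm V) = matchings G := by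
  rw [fixedMatchings]
  apply Finset.filter_true_of_mem
  intro μ _
  have : Sym2.map (⇑(1 : Equiv.Perm V)) = id := by
    rw [Equiv.Perm.coe_one, Sym2.map_id]
  rw [this, Finset.image_id]

lemma wM_one {n : ℕ} {μ : Finset (Sym2 (Fin n))} (hμ : μ ∈ matchings (pathG n)) :
    wM (pathG n) μ (1 : Equiv.Perm (Fin n)) =
      va 1 ^ n * (vb 1 ^ μ.card * vbeta 1 ^ ((n - 1) - μ.card)) := by
  rw [wM]
  have h1 : 1 < Fintype.card (Fin n) * Fintype.card (Fin n) + 2 := by omega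
  rw [prod_pow_single va _ _ 1 h1 (fun k hk => by rw [vcyc_one]; simp [hk])]
  rw [prod_pow_single vb _ _ 1 h1 (fun k hk => by rw [cylCntY_one hμ]; simp [hk])]
  rw [prod_pow_single vbeta _ _ 1 h1 (fun k hk => by rw [cylCntZ_one hμ]; simp [hk])]
  rw [prod_pow_zero vc _ _ (fun k => mobCntY_one μ k)]
  rw [prod_pow_zero vgamma _ _ (fun k => mobCntZ_one μ k)]
  rw [vcyc_one, cylCntY_one hμ, cylCntZ_one hμ]
  simp only [if_true, if_pos trivial, Fintype.card_fin, card_eFin_pathG]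
  ring

lemma sum_one_part {n : ℕ} :
    ∑ μ ∈ fixedMatchings (pathG n) (1 : Equiv.Perm (Fin n)), wM (pathG n) μ 1 =
      va 1 ^ n * Upoly n (vb 1) (vbeta 1) := by
  rw [fixedMatchings_one, Upoly, Finset.mul_sum]
  apply Finset.sum_congr rfl
  intro μ hμ
  rw [wM_one hμ]

end IdentityComp
section Invol

variable {V : Type*} [Fintype V]

lemma zpow_invol {π : Equiv.Perm V} (h : π * π = 1) (k : ℤ) : π ^ k = 1 ∨ π ^ k = π := by
  have hsq : π ^ (2:ℤ) = 1 := by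
    rw [show (2:ℤ) = 1 + 1 by norm_num, zpow_add, zpow_one, h]
  have hk : π ^ k = π ^ (k % 2) * (π ^ (2:ℤ)) ^ (k / 2) := by
    rw [← zpow_mul, ← zpow_add, Int.emod_add_mul_ediv k 2]
  rcases Int.emod_two_eq k with hm | hm
  · left; rw [hk, hm, hsq, one_zpow, zpow_zero, one_mul]
  · right; rw [hk, hm, hsq, one_zpow, zpow_one, mul_one]

lemma sameCycle_invol {π : Equiv.Perm V} (h : π * π = 1) {x y : V} :
    π.SameCycle x y ↔ y = x ∨ y = π x := by
  constructor
  · rintro ⟨k, hk⟩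
    rcases zpow_invol h k with h1 | h1 <;> rw [h1] at hk
    · left; exact hk.symm
    · right; exact hk.symm
  · rintro (rfl | rfl)
    · exact ⟨0, by simp⟩
    · exact ⟨1, by simp⟩

lemma orbSize_invol {π : Equiv.Perm V} (h : π * π = 1) (v : V) :
    orbSize π v = if π v = v then 1 else 2 := by
  rw [orbSize]
  have hs : (Finset.univ.filter fun u => π.SameCycle v u) = {v, π v} := by
    ext u
    simp [sameCycle_invol h]
  rw [hs]
  split_ifs with hf
  · rw [hf]; simp
  · rw [Finset.card_insert_of_notMem (by simp [Ne.symm hf]), Finset.card_singleton]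

lemma eOrbLen_invol {σ : Equiv.Perm V} (h : edgePerm σ * edgePerm σ = 1) (e : Sym2 V) :
    eOrbLen σ e = if edgePerm σ e = e then 1 else 2 := by
  rw [eOrbLen]
  have hs : (Finset.univ.filter fun f => (edgePerm σ).SameCycle e f) = {e, edgePerm σ e} := by
    ext f
    simp [sameCycle_invol h]
  rw [hs]
  split_ifs with hf
  · rw [hf]; simp
  · rw [Finset.card_insert_of_notMem (by simp [Ne.symm hf]), Finset.card_singleton]

lemma isCylE_of_len2 {σ : Equiv.Perm V} (h : σ * σ = 1) {e : Sym2 V}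
    (hlen : eOrbLen σ e = 2) : IsCylE σ e := by
  intro f _ u v _
  rw [hlen, sq, h]
  simp

lemma not_isMobE_of_len2 {σ : Equiv.Perm V} (h : σ * σ = 1) {e : Sym2 V}
    (hlen : eOrbLen σ e = 2) : ¬ IsMobE σ e := by
  intro hm
  induction e using Sym2.ind with
  | _ u v =>
    obtain ⟨hne, h1, -⟩ := hm s(u, v) (Equiv.Perm.SameCycle.refl _ _) u v rfl
    rw [hlen, sq, h] at h1
    simp at h1
    exact hne h1

end Invol

section RevComp

variable {n : ℕ}

lemma edgePerm_apply (σ : Equiv.Perm (Fin n)) (e : Sym2 (Fin n)) :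
    edgePerm σ e = Sym2.map σ e := rfl

lemma rev_invol : (Fin.revPerm * Fin.revPerm : Equiv.Perm (Fin n)) = 1 :=
  revPerm_mul_revPerm

lemma edgePerm_rev_invol :
    (edgePerm Fin.revPerm * edgePerm Fin.revPerm : Equiv.Perm (Sym2 (Fin n))) = 1 := by
  apply Equiv.ext
  intro e
  induction e using Sym2.ind with
  | _ u v =>
    rw [Equiv.Perm.mul_apply, edgePerm_apply, edgePerm_apply]
    simp

lemma rev_ne (hev : n % 2 = 0) (v : Fin n) : (Fin.revPerm : Equiv.Perm (Fin n)) v ≠ v := by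
  intro h
  have := congrArg Fin.val h
  rw [Fin.revPerm_apply, Fin.val_rev] at this
  have hv := v.isLt
  omega

lemma vcyc_rev (hev : n % 2 = 0) (k : ℕ) :
    vcyc (Fin.revPerm : Equiv.Perm (Fin n)) k = if k = 2 then n / 2 else 0 := by
  rw [vcyc]
  have horb : ∀ v : Fin n, orbSize (Fin.revPerm : Equiv.Perm (Fin n)) v = 2 := by
    intro v
    rw [orbSize_invol rev_invol, if_neg (rev_ne hev v)]
  split_ifs with h
  · subst h
    have : (Finset.univ.filter fun v : Fin n =>
        orbSize (Fin.revPerm : Equiv.Perm (Fin n)) v = 2) = Finset.univ := by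
      ext v; simp [horb]
    rw [this, Finset.card_univ, Fintype.card_fin]
  · have : (Finset.univ.filter fun v : Fin n =>
        orbSize (Fin.revPerm : Equiv.Perm (Fin n)) v = k) = ∅ := by
      ext v
      simp only [Finset.mem_filter, Finset.mem_univ, true_and, horb,
        Finset.notMem_empty, iff_false]
      omega
    rw [this, Finset.card_empty, Nat.zero_div]

lemma edgePerm_rev_pedge (i : Fin (n-1)) :
    edgePerm (Fin.revPerm : Equiv.Perm (Fin n)) (pedge n i) =
      pedge n ⟨n - 2 - i.val, by have := i.isLt; omega⟩ := by
  have hi := i.isLt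
  rw [pedge, pedge, edgePerm_apply, Sym2.map_pair_eq, Sym2.eq_swap]
  apply congrArg₂ (fun a b => s(a, b)) <;>
    · apply Fin.ext
      simp [Fin.val_rev]
      all_goals omega

/-- The middle edge of the even path. -/
def midE (n : ℕ) (h : 4 ≤ n) : Sym2 (Fin n) :=
  s(⟨n/2 - 1, by omega⟩, ⟨n/2, by omega⟩)

lemma midE_eq_pedge (h : 4 ≤ n) : midE n h = pedge n ⟨n/2 - 1, by omega⟩ := by
  rw [midE, pedge]
  apply congrArg₂ (fun a b => s(a, b)) <;> apply Fin.ext <;> simp <;> omega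

lemma edgePerm_rev_fix_iff (hn : 4 ≤ n) (hev : n % 2 = 0) {e : Sym2 (Fin n)}
    (he : e ∈ eFin (pathG n)) :
    edgePerm (Fin.revPerm : Equiv.Perm (Fin n)) e = e ↔ e = midE n hn := by
  obtain ⟨i, rfl⟩ := mem_eFin_pathG.mp he
  have hi := i.isLt
  rw [edgePerm_rev_pedge, midE_eq_pedge]
  constructor
  · intro h
    have := congrArg Fin.val (pedge_inj h)
    simp at this
    apply congrArg
    apply Fin.ext
    simp
    omega
  · intro h
    have := congrArg Fin.val (pedge_inj h)
    simp at this
    apply congrArg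
    apply Fin.ext
    simp
    omega

lemma eOrbLen_rev (hn : 4 ≤ n) (hev : n % 2 = 0) {e : Sym2 (Fin n)}
    (he : e ∈ eFin (pathG n)) :
    eOrbLen (Fin.revPerm : Equiv.Perm (Fin n)) e = if e = midE n hn then 1 else 2 := by
  rw [eOrbLen_invol edgePerm_rev_invol]
  by_cases h : e = midE n hn
  · rw [if_pos ((edgePerm_rev_fix_iff hn hev he).mpr h), if_pos h]
  · rw [if_neg (fun hh => h ((edgePerm_rev_fix_iff hn hev he).mp hh)), if_neg h]

lemma isMobE_rev_mid (hn : 4 ≤ n) (hev : n % 2 = 0) :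
    IsMobE (Fin.revPerm : Equiv.Perm (Fin n)) (midE n hn) := by
  have hmem : midE n hn ∈ eFin (pathG n) := by
    rw [mem_eFin_pathG]
    exact ⟨_, midE_eq_pedge hn⟩
  have hlen : eOrbLen (Fin.revPerm : Equiv.Perm (Fin n)) (midE n hn) = 1 := by
    rw [eOrbLen_rev hn hev hmem, if_pos rfl]
  have hfix : edgePerm (Fin.revPerm : Equiv.Perm (Fin n)) (midE n hn) = midE n hn :=
    (edgePerm_rev_fix_iff hn hev hmem).mpr rfl
  intro f hf u v hfe
  have hfmid : f = midE n hn := by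
    rcases (sameCycle_invol edgePerm_rev_invol).mp hf with h | h
    · exact h
    · rw [h, hfix]
  rw [hlen, pow_one]
  subst hfmid
  rw [midE] at hfe
  rw [Sym2.eq_iff] at hfe
  have h1 : ((⟨n/2-1, by omega⟩ : Fin n) : ℕ) = n/2 - 1 := rfl
  rcases hfe with ⟨rfl, rfl⟩ | ⟨rfl, rfl⟩ <;>
    refine ⟨by simp [Fin.ext_iff]; omega, ?_, ?_⟩ <;>
      (apply Fin.ext; simp [Fin.val_rev]; omega)

lemma not_isCylE_rev_mid (hn : 4 ≤ n) (hev : n % 2 = 0) :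
    ¬ IsCylE (Fin.revPerm : Equiv.Perm (Fin n)) (midE n hn) := by
  intro h
  obtain ⟨h1, -⟩ := h (midE n hn) (Equiv.Perm.SameCycle.refl _ _)
    ⟨n/2 - 1, by omega⟩ ⟨n/2, by omega⟩ rfl
  have hmem : midE n hn ∈ eFin (pathG n) := by
    rw [mem_eFin_pathG]
    exact ⟨_, midE_eq_pedge hn⟩
  have hlen : eOrbLen (Fin.revPerm : Equiv.Perm (Fin n)) (midE n hn) = 1 := by
    rw [eOrbLen_rev hn hev hmem, if_pos rfl]
  rw [hlen, pow_one] at h1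
  exact rev_ne hev _ h1

end RevComp
section RevCounts

variable {n : ℕ}

lemma cylCntY_rev (hn : 4 ≤ n) (hev : n % 2 = 0) {μ : Finset (Sym2 (Fin n))}
    (hμ : μ ∈ matchings (pathG n)) (k : ℕ) :
    cylCntY (pathG n) μ (Fin.revPerm : Equiv.Perm (Fin n)) k =
      if k = 2 then (μ.erase (midE n hn)).card / 2 else 0 := by
  rw [cylCntY]
  split_ifs with h
  · subst h
    refine congrArg (· / 2) (congrArg Finset.card ?_)
    ext e
    simp only [Finset.mem_filter, Finset.mem_erase]
    constructor
    · rintro ⟨hef, heμ, hlen, -⟩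
      refine ⟨fun hmid => ?_, heμ⟩
      rw [eOrbLen_rev hn hev hef, if_pos hmid] at hlen
      omega
    · rintro ⟨hne, heμ⟩
      have hef := matchings_sub hμ heμ
      have hlen : eOrbLen (Fin.revPerm : Equiv.Perm (Fin n)) e = 2 := by
        rw [eOrbLen_rev hn hev hef, if_neg hne]
      exact ⟨hef, heμ, hlen, isCylE_of_len2 rev_invol hlen⟩
  · have hfalse : ∀ e ∈ eFin (pathG n), ¬(e ∈ μ ∧
        eOrbLen (Fin.revPerm : Equiv.Perm (Fin n)) e = k ∧
        IsCylE (Fin.revPerm : Equiv.Perm (Fin n)) e) := by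
      rintro e hef ⟨-, hlen, hcy⟩
      by_cases hmid : e = midE n hn
      · subst hmid
        exact not_isCylE_rev_mid hn hev hcy
      · rw [eOrbLen_rev hn hev hef, if_neg hmid] at hlen
        exact h hlen.symm
    refine Eq.trans (congrArg (fun t => t / k) ?_) (Nat.zero_div k)
    rw [Finset.card_eq_zero, Finset.eq_empty_iff_forall_notMem]
    intro e he
    simp only [Finset.mem_filter] at he
    exact hfalse e he.1 he.2

lemma cylCntZ_rev (hn : 4 ≤ n) (hev : n % 2 = 0) {μ : Finset (Sym2 (Fin n))}
    (hμ : μ ∈ matchings (pathG n)) (k : ℕ) :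
    cylCntZ (pathG n) μ (Fin.revPerm : Equiv.Perm (Fin n)) k =
      if k = 2 then ((eFin (pathG n) \ μ).erase (midE n hn)).card / 2 else 0 := by
  rw [cylCntZ]
  split_ifs with h
  · subst h
    refine congrArg (· / 2) (congrArg Finset.card ?_)
    ext e
    simp only [Finset.mem_filter, Finset.mem_erase, Finset.mem_sdiff]
    constructor
    · rintro ⟨hef, heμ, hlen, -⟩
      refine ⟨fun hmid => ?_, hef, heμ⟩
      rw [eOrbLen_rev hn hev hef, if_pos hmid] at hlen
      omega
    · rintro ⟨hne, hef, heμ⟩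
      have hlen : eOrbLen (Fin.revPerm : Equiv.Perm (Fin n)) e = 2 := by
        rw [eOrbLen_rev hn hev hef, if_neg hne]
      exact ⟨hef, heμ, hlen, isCylE_of_len2 rev_invol hlen⟩
  · have hfalse : ∀ e ∈ eFin (pathG n), ¬(e ∉ μ ∧
        eOrbLen (Fin.revPerm : Equiv.Perm (Fin n)) e = k ∧
        IsCylE (Fin.revPerm : Equiv.Perm (Fin n)) e) := by
      rintro e hef ⟨-, hlen, hcy⟩
      by_cases hmid : e = midE n hn
      · subst hmid
        exact not_isCylE_rev_mid hn hev hcy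
      · rw [eOrbLen_rev hn hev hef, if_neg hmid] at hlen
        exact h hlen.symm
    refine Eq.trans (congrArg (fun t => t / k) ?_) (Nat.zero_div k)
    rw [Finset.card_eq_zero, Finset.eq_empty_iff_forall_notMem]
    intro e he
    simp only [Finset.mem_filter] at he
    exact hfalse e he.1 he.2

lemma midE_mem_eFin (hn : 4 ≤ n) : midE n hn ∈ eFin (pathG n) := by
  rw [mem_eFin_pathG]
  exact ⟨_, midE_eq_pedge hn⟩

lemma mobCntY_rev (hn : 4 ≤ n) (hev : n % 2 = 0) {μ : Finset (Sym2 (Fin n))}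
    (hμ : μ ∈ matchings (pathG n)) (k : ℕ) :
    mobCntY (pathG n) μ (Fin.revPerm : Equiv.Perm (Fin n)) k =
      if k = 1 then (if midE n hn ∈ μ then 1 else 0) else 0 := by
  rw [mobCntY]
  by_cases h1 : k = 1
  · subst h1
    rw [if_pos rfl, Nat.div_one]
    by_cases h2 : midE n hn ∈ μ
    · rw [if_pos h2, Finset.card_eq_one]
      refine ⟨midE n hn, ?_⟩
      ext e
      simp only [Finset.mem_filter, Finset.mem_singleton]
      constructor
      · rintro ⟨hef, heμ, hlen, hmob⟩
        by_contra hne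
        have hlen2 : eOrbLen (Fin.revPerm : Equiv.Perm (Fin n)) e = 2 := by
          rw [eOrbLen_rev hn hev hef, if_neg hne]
        exact not_isMobE_of_len2 rev_invol hlen2 hmob
      · rintro rfl
        refine ⟨midE_mem_eFin hn, h2, ?_, isMobE_rev_mid hn hev⟩
        rw [eOrbLen_rev hn hev (midE_mem_eFin hn), if_pos rfl]
    · rw [if_neg h2, Finset.card_eq_zero, Finset.eq_empty_iff_forall_notMem]
      intro e he
      simp only [Finset.mem_filter] at he
      obtain ⟨hef, heμ, hlen, hmob⟩ := he
      by_cases hmid : e = midE n hn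
      · subst hmid
        exact h2 heμ
      · have hlen2 : eOrbLen (Fin.revPerm : Equiv.Perm (Fin n)) e = 2 := by
          rw [eOrbLen_rev hn hev hef, if_neg hmid]
        exact not_isMobE_of_len2 rev_invol hlen2 hmob
  · rw [if_neg h1]
    have hfalse : ∀ e ∈ eFin (pathG n), ¬(e ∈ μ ∧
        eOrbLen (Fin.revPerm : Equiv.Perm (Fin n)) e = k ∧
        IsMobE (Fin.revPerm : Equiv.Perm (Fin n)) e) := by
      rintro e hef ⟨-, hlen, hmob⟩
      by_cases hmid : e = midE n hn
      · subst hmid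
        rw [eOrbLen_rev hn hev hef, if_pos rfl] at hlen
        exact h1 hlen.symm
      · have hlen2 : eOrbLen (Fin.revPerm : Equiv.Perm (Fin n)) e = 2 := by
          rw [eOrbLen_rev hn hev hef, if_neg hmid]
        exact not_isMobE_of_len2 rev_invol hlen2 hmob
    refine Eq.trans (congrArg (fun t => t / k) ?_) (Nat.zero_div k)
    rw [Finset.card_eq_zero, Finset.eq_empty_iff_forall_notMem]
    intro e he
    simp only [Finset.mem_filter] at he
    exact hfalse e he.1 he.2

lemma mobCntZ_rev (hn : 4 ≤ n) (hev : n % 2 = 0) {μ : Finset (Sym2 (Fin n))}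
    (hμ : μ ∈ matchings (pathG n)) (k : ℕ) :
    mobCntZ (pathG n) μ (Fin.revPerm : Equiv.Perm (Fin n)) k =
      if k = 1 then (if midE n hn ∈ μ then 0 else 1) else 0 := by
  rw [mobCntZ]
  by_cases h1 : k = 1
  · subst h1
    rw [if_pos rfl, Nat.div_one]
    by_cases h2 : midE n hn ∈ μ
    · rw [if_pos h2, Finset.card_eq_zero, Finset.eq_empty_iff_forall_notMem]
      intro e he
      simp only [Finset.mem_filter] at he
      obtain ⟨hef, heμ, hlen, hmob⟩ := he
      by_cases hmid : e = midE n hn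
      · subst hmid
        exact heμ h2
      · have hlen2 : eOrbLen (Fin.revPerm : Equiv.Perm (Fin n)) e = 2 := by
          rw [eOrbLen_rev hn hev hef, if_neg hmid]
        exact not_isMobE_of_len2 rev_invol hlen2 hmob
    · rw [if_neg h2, Finset.card_eq_one]
      refine ⟨midE n hn, ?_⟩
      ext e
      simp only [Finset.mem_filter, Finset.mem_singleton]
      constructor
      · rintro ⟨hef, heμ, hlen, hmob⟩
        by_contra hne
        have hlen2 : eOrbLen (Fin.revPerm : Equiv.Perm (Fin n)) e = 2 := by
          rw [eOrbLen_rev hn hev hef, if_neg hne]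
        exact not_isMobE_of_len2 rev_invol hlen2 hmob
      · rintro rfl
        refine ⟨midE_mem_eFin hn, h2, ?_, isMobE_rev_mid hn hev⟩
        rw [eOrbLen_rev hn hev (midE_mem_eFin hn), if_pos rfl]
  · rw [if_neg h1]
    have hfalse : ∀ e ∈ eFin (pathG n), ¬(e ∉ μ ∧
        eOrbLen (Fin.revPerm : Equiv.Perm (Fin n)) e = k ∧
        IsMobE (Fin.revPerm : Equiv.Perm (Fin n)) e) := by
      rintro e hef ⟨-, hlen, hmob⟩
      by_cases hmid : e = midE n hn
      · subst hmid
        rw [eOrbLen_rev hn hev hef, if_pos rfl] at hlen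
        exact h1 hlen.symm
      · have hlen2 : eOrbLen (Fin.revPerm : Equiv.Perm (Fin n)) e = 2 := by
          rw [eOrbLen_rev hn hev hef, if_neg hmid]
        exact not_isMobE_of_len2 rev_invol hlen2 hmob
    refine Eq.trans (congrArg (fun t => t / k) ?_) (Nat.zero_div k)
    rw [Finset.card_eq_zero, Finset.eq_empty_iff_forall_notMem]
    intro e he
    simp only [Finset.mem_filter] at he
    exact hfalse e he.1 he.2

lemma wM_rev (hn : 4 ≤ n) (hev : n % 2 = 0) {μ : Finset (Sym2 (Fin n))}
    (hμ : μ ∈ matchings (pathG n)) :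
    wM (pathG n) μ (Fin.revPerm : Equiv.Perm (Fin n)) =
      va 2 ^ (n / 2) * vb 2 ^ ((μ.erase (midE n hn)).card / 2) *
        vc 1 ^ (if midE n hn ∈ μ then 1 else 0) *
        vbeta 2 ^ (((eFin (pathG n) \ μ).erase (midE n hn)).card / 2) *
        vgamma 1 ^ (if midE n hn ∈ μ then 0 else 1) := by
  rw [wM]
  have h1 : 1 < Fintype.card (Fin n) * Fintype.card (Fin n) + 2 := by omega
  have h2 : 2 < Fintype.card (Fin n) * Fintype.card (Fin n) + 2 := by
    simp only [Fintype.card_fin]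
    nlinarith
  rw [prod_pow_single va _ _ 2 h2 (fun k hk => by rw [vcyc_rev hev]; simp [hk])]
  rw [prod_pow_single vb _ _ 2 h2 (fun k hk => by rw [cylCntY_rev hn hev hμ]; simp [hk])]
  rw [prod_pow_single vbeta _ _ 2 h2 (fun k hk => by rw [cylCntZ_rev hn hev hμ]; simp [hk])]
  rw [prod_pow_single vc _ _ 1 h1 (fun k hk => by rw [mobCntY_rev hn hev hμ]; simp [hk])]
  rw [prod_pow_single vgamma _ _ 1 h1 (fun k hk => by rw [mobCntZ_rev hn hev hμ]; simp [hk])]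
  rw [vcyc_rev hev, cylCntY_rev hn hev hμ, cylCntZ_rev hn hev hμ,
    mobCntY_rev hn hev hμ, mobCntZ_rev hn hev hμ]
  simp only [if_true, if_pos trivial]

end RevCounts
section IndexLevel

variable {n : ℕ}

/-- Sparse subsets of edge indices: no two consecutive. -/
def SparseS {k : ℕ} (S : Finset (Fin k)) : Prop :=
  ∀ i ∈ S, ∀ j ∈ S, (i:ℕ) + 1 ≠ (j:ℕ)

/-- The finset of sparse subsets. -/
def sparseF (k : ℕ) : Finset (Finset (Fin k)) := Finset.univ.filter SparseS

lemma mem_sparseF {k : ℕ} {S : Finset (Fin k)} : S ∈ sparseF k ↔ SparseS S := by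
  simp [sparseF]

lemma mem_pedge {v : Fin n} {i : Fin (n-1)} :
    v ∈ pedge n i ↔ (v:ℕ) = (i:ℕ) ∨ (v:ℕ) = (i:ℕ)+1 := by
  rw [pedge, Sym2.mem_iff]
  simp [Fin.ext_iff]

lemma image_pedge_matching {S : Finset (Fin (n-1))} :
    S.image (pedge n) ∈ matchings (pathG n) ↔ SparseS S := by
  rw [mem_matchings_iff]
  constructor
  · rintro ⟨-, hd⟩ i hi j hj hij
    have hne : pedge n i ≠ pedge n j := by
      intro heq
      have := congrArg Fin.val (pedge_inj heq)
      omega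
    have hjlt : (j:ℕ) < n := by have := j.isLt; omega
    have hv1 : (⟨(j:ℕ), hjlt⟩ : Fin n) ∈ pedge n i := by
      rw [mem_pedge]; right; simp [hij]
    have hv2 : (⟨(j:ℕ), hjlt⟩ : Fin n) ∈ pedge n j := by
      rw [mem_pedge]; left; rfl
    exact hd _ (Finset.mem_image_of_mem _ hi) _ (Finset.mem_image_of_mem _ hj) hne _ hv1 hv2
  · intro hs
    constructor
    · intro e he
      rw [Finset.coe_image, Set.mem_image] at he
      obtain ⟨i, -, rfl⟩ := he
      exact mem_edgeSet_pathG.mpr ⟨i, rfl⟩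
    · intro e he f hf hef v hve hvf
      rw [Finset.mem_image] at he hf
      obtain ⟨i, hi, rfl⟩ := he
      obtain ⟨j, hj, rfl⟩ := hf
      rw [mem_pedge] at hve hvf
      have hij : i ≠ j := fun h => hef (congrArg _ h)
      have hij' : (i:ℕ) ≠ (j:ℕ) := fun h => hij (Fin.ext h)
      have h1 := hs i hi j hj
      have h2 := hs j hj i hi
      omega

lemma matchings_pathG_eq :
    matchings (pathG n) = (sparseF (n-1)).image (fun S => S.image (pedge n)) := by
  ext μ
  constructor
  · intro hμ
    rw [Finset.mem_image]
    refine ⟨Finset.univ.filter (fun i => pedge n i ∈ μ), ?_, ?_⟩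
    · rw [mem_sparseF]
      have himg : (Finset.univ.filter (fun i => pedge n i ∈ μ)).image (pedge n) = μ := by
        ext e
        rw [Finset.mem_image]
        constructor
        · rintro ⟨i, hi, rfl⟩
          exact (Finset.mem_filter.mp hi).2
        · intro he
          obtain ⟨i, rfl⟩ := mem_edgeSet_pathG.mp ((mem_matchings_iff.mp hμ).1 he)
          exact ⟨i, Finset.mem_filter.mpr ⟨Finset.mem_univ _, he⟩, rfl⟩
      rw [← image_pedge_matching, himg]
      exact hμ
    · ext e
      rw [Finset.mem_image]
      constructor
      · rintro ⟨i, hi, rfl⟩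
        exact (Finset.mem_filter.mp hi).2
      · intro he
        obtain ⟨i, rfl⟩ := mem_edgeSet_pathG.mp ((mem_matchings_iff.mp hμ).1 he)
        exact ⟨i, Finset.mem_filter.mpr ⟨Finset.mem_univ _, he⟩, rfl⟩
  · intro hμ
    rw [Finset.mem_image] at hμ
    obtain ⟨S, hS, rfl⟩ := hμ
    exact image_pedge_matching.mpr (mem_sparseF.mp hS)

lemma sum_over_matchings {R : Type*} [CommSemiring R] (f : Finset (Sym2 (Fin n)) → R) :
    ∑ μ ∈ matchings (pathG n), f μ = ∑ S ∈ sparseF (n-1), f (S.image (pedge n)) := by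
  rw [matchings_pathG_eq]
  apply Finset.sum_image
  intro S _ T _ h
  exact Finset.image_injective pedge_inj h

lemma Upoly_eq_index_sum (m : ℕ) (Y Z : WRing) :
    Upoly m Y Z = ∑ S ∈ sparseF (m-1), Y ^ S.card * Z ^ ((m-1) - S.card) := by
  rw [Upoly, sum_over_matchings]
  apply Finset.sum_congr rfl
  intro S _
  rw [Finset.card_image_of_injective _ pedge_inj]

/-- The reversal on edge indices. -/
def irev (n : ℕ) : Fin (n-1) → Fin (n-1) :=
  fun i => ⟨n - 2 - i.val, by have := i.isLt; omega⟩

lemma irev_invol (i : Fin (n-1)) : irev n (irev n i) = i := by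
  have := i.isLt
  apply Fin.ext
  simp [irev]
  omega

lemma irev_inj : Function.Injective (irev n) := by
  intro i j h
  have h1 := congrArg Fin.val h
  have hi := i.isLt
  have hj := j.isLt
  simp [irev] at h1
  apply Fin.ext
  omega

lemma sym2map_rev_pedge (i : Fin (n-1)) :
    Sym2.map (⇑(Fin.revPerm : Equiv.Perm (Fin n))) (pedge n i) = pedge n (irev n i) := by
  have := edgePerm_rev_pedge i
  rw [edgePerm_apply] at this
  rw [this]
  rfl

lemma mem_of_sym {S : Finset (Fin (n-1))} (hsym : S.image (irev n) = S) {i : Fin (n-1)}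
    (hi : i ∈ S) : irev n i ∈ S := by
  rw [← hsym]
  exact Finset.mem_image_of_mem _ hi

lemma fixedMatchings_rev_eq :
    fixedMatchings (pathG n) (Fin.revPerm : Equiv.Perm (Fin n)) =
      ((sparseF (n-1)).filter (fun S => S.image (irev n) = S)).image
        (fun S => S.image (pedge n)) := by
  ext μ
  simp only [fixedMatchings, Finset.mem_filter, Finset.mem_image]
  constructor
  · rintro ⟨hμ, hfix⟩
    rw [matchings_pathG_eq, Finset.mem_image] at hμ
    obtain ⟨S, hS, rfl⟩ := hμ
    have hmem := Finset.ext_iff.mp hfix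
    simp only [Finset.mem_image] at hmem
    refine ⟨S, ⟨Finset.mem_filter.mpr ⟨Finset.mem_univ _, ?_⟩, ?_⟩, rfl⟩
    · exact mem_sparseF.mp hS
    · ext i
      rw [Finset.mem_image]
      constructor
      · rintro ⟨j, hj, rfl⟩
        obtain ⟨i', hi', he'⟩ :=
          (hmem (pedge n (irev n j))).mp ⟨pedge n j, ⟨j, hj, rfl⟩, sym2map_rev_pedge j⟩
        rwa [← pedge_inj he']
      · intro hi
        obtain ⟨i', hi', he'⟩ :=
          (hmem (pedge n (irev n i))).mp ⟨pedge n i, ⟨i, hi, rfl⟩, sym2map_rev_pedge i⟩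
        rw [pedge_inj he'] at hi'
        exact ⟨irev n i, hi', irev_invol i⟩
  · rintro ⟨S, ⟨hS', hsym⟩, rfl⟩
    refine ⟨image_pedge_matching.mpr (by simpa [sparseF] using hS'), ?_⟩
    ext e
    simp only [Finset.mem_image]
    constructor
    · rintro ⟨b, ⟨i, hi, rfl⟩, rfl⟩
      exact ⟨irev n i, mem_of_sym hsym hi, (sym2map_rev_pedge i).symm⟩
    · rintro ⟨i, hi, rfl⟩
      exact ⟨pedge n (irev n i), ⟨irev n i, mem_of_sym hsym hi, rfl⟩,
        by rw [sym2map_rev_pedge, irev_invol]⟩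

lemma card_image_pedge (S : Finset (Fin (n-1))) :
    (S.image (pedge n)).card = S.card :=
  Finset.card_image_of_injective _ pedge_inj

lemma mid_mem_image_iff (hn : 4 ≤ n) {S : Finset (Fin (n-1))} :
    midE n hn ∈ S.image (pedge n) ↔ (⟨n/2 - 1, by omega⟩ : Fin (n-1)) ∈ S := by
  rw [midE_eq_pedge hn, Finset.mem_image]
  constructor
  · rintro ⟨i, hi, hie⟩
    rwa [pedge_inj hie] at hi
  · intro h
    exact ⟨_, h, rfl⟩

end IndexLevel
section Bijections

variable {n : ℕ}

/-- Inclusion of low edge indices (case without middle edge). -/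
def upL (n : ℕ) (i : Fin (n/2 - 1)) : Fin (n-1) :=
  ⟨i.val, by have := i.isLt; omega⟩

/-- Inclusion of low edge indices (case with middle edge). -/
def upL2 (n : ℕ) (i : Fin ((n-2)/2 - 1)) : Fin (n-1) :=
  ⟨i.val, by have := i.isLt; omega⟩

def PhiA (n : ℕ) (T : Finset (Fin (n/2 - 1))) : Finset (Fin (n-1)) :=
  T.image (upL n) ∪ T.image (fun i => irev n (upL n i))

def PsiA (n : ℕ) (S : Finset (Fin (n-1))) : Finset (Fin (n/2 - 1)) :=
  (S.filter (fun a => a.val < n/2 - 1)).attach.image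
    (fun a => ⟨a.1.val, by exact (Finset.mem_filter.mp a.2).2⟩)

def PhiB (n : ℕ) (hn : 4 ≤ n) (T : Finset (Fin ((n-2)/2 - 1))) : Finset (Fin (n-1)) :=
  insert (⟨n/2 - 1, by omega⟩ : Fin (n-1))
    (T.image (upL2 n) ∪ T.image (fun i => irev n (upL2 n i)))

def PsiB (n : ℕ) (S : Finset (Fin (n-1))) : Finset (Fin ((n-2)/2 - 1)) :=
  (S.filter (fun a => a.val < (n-2)/2 - 1)).attach.image
    (fun a => ⟨a.1.val, by exact (Finset.mem_filter.mp a.2).2⟩)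

lemma mem_PhiA {T : Finset (Fin (n/2 - 1))} {j : Fin (n-1)} :
    j ∈ PhiA n T ↔ ∃ i ∈ T, (j:ℕ) = (i:ℕ) ∨ (j:ℕ) = n - 2 - (i:ℕ) := by
  rw [PhiA, Finset.mem_union, Finset.mem_image, Finset.mem_image]
  constructor
  · rintro (⟨i, hi, rfl⟩ | ⟨i, hi, rfl⟩)
    · exact ⟨i, hi, Or.inl rfl⟩
    · exact ⟨i, hi, Or.inr rfl⟩
  · rintro ⟨i, hi, h | h⟩
    · exact Or.inl ⟨i, hi, Fin.ext h.symm⟩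
    · exact Or.inr ⟨i, hi, Fin.ext h.symm⟩

lemma mem_PhiB (hn : 4 ≤ n) {T : Finset (Fin ((n-2)/2 - 1))} {j : Fin (n-1)} :
    j ∈ PhiB n hn T ↔
      (j:ℕ) = n/2 - 1 ∨ ∃ i ∈ T, (j:ℕ) = (i:ℕ) ∨ (j:ℕ) = n - 2 - (i:ℕ) := by
  rw [PhiB, Finset.mem_insert, Finset.mem_union, Finset.mem_image, Finset.mem_image]
  constructor
  · rintro (rfl | ⟨i, hi, rfl⟩ | ⟨i, hi, rfl⟩)
    · exact Or.inl rfl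
    · exact Or.inr ⟨i, hi, Or.inl rfl⟩
    · exact Or.inr ⟨i, hi, Or.inr rfl⟩
  · rintro (h | ⟨i, hi, h | h⟩)
    · exact Or.inl (Fin.ext h)
    · exact Or.inr (Or.inl ⟨i, hi, Fin.ext h.symm⟩)
    · exact Or.inr (Or.inr ⟨i, hi, Fin.ext h.symm⟩)

lemma mem_PsiA {S : Finset (Fin (n-1))} {i : Fin (n/2 - 1)} :
    i ∈ PsiA n S ↔ ∃ a ∈ S, (a:ℕ) < n/2 - 1 ∧ (i:ℕ) = (a:ℕ) := by
  rw [PsiA, Finset.mem_image]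
  constructor
  · rintro ⟨a, -, rfl⟩
    obtain ⟨ha, hlt⟩ := Finset.mem_filter.mp a.2
    exact ⟨a.1, ha, hlt, rfl⟩
  · rintro ⟨a, ha, hlt, hval⟩
    exact ⟨⟨a, Finset.mem_filter.mpr ⟨ha, hlt⟩⟩, Finset.mem_attach _ _, Fin.ext hval.symm⟩

lemma mem_PsiB {S : Finset (Fin (n-1))} {i : Fin ((n-2)/2 - 1)} :
    i ∈ PsiB n S ↔ ∃ a ∈ S, (a:ℕ) < (n-2)/2 - 1 ∧ (i:ℕ) = (a:ℕ) := by
  rw [PsiB, Finset.mem_image]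
  constructor
  · rintro ⟨a, -, rfl⟩
    obtain ⟨ha, hlt⟩ := Finset.mem_filter.mp a.2
    exact ⟨a.1, ha, hlt, rfl⟩
  · rintro ⟨a, ha, hlt, hval⟩
    exact ⟨⟨a, Finset.mem_filter.mpr ⟨ha, hlt⟩⟩, Finset.mem_attach _ _, Fin.ext hval.symm⟩

lemma val_irev (i : Fin (n-1)) : (irev n i : ℕ) = n - 2 - (i:ℕ) := rfl

end Bijections
section BijA

variable {n : ℕ}

/-- The middle edge index. -/
def mid0 (n : ℕ) (hn : 4 ≤ n) : Fin (n-1) := ⟨n/2 - 1, by omega⟩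

lemma card_PsiA (S : Finset (Fin (n-1))) :
    (PsiA n S).card = (S.filter (fun a => a.val < n/2 - 1)).card := by
  rw [PsiA, Finset.card_image_of_injective _
    (fun a b h => Subtype.ext (Fin.ext (by simpa using congrArg Fin.val h))),
    Finset.card_attach]

lemma card_PsiB (S : Finset (Fin (n-1))) :
    (PsiB n S).card = (S.filter (fun a => a.val < (n-2)/2 - 1)).card := by
  rw [PsiB, Finset.card_image_of_injective _
    (fun a b h => Subtype.ext (Fin.ext (by simpa using congrArg Fin.val h))),
    Finset.card_attach]

lemma mem_sA (hn : 4 ≤ n) {S : Finset (Fin (n-1))} :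
    S ∈ ((sparseF (n-1)).filter (fun S => S.image (irev n) = S)).filter
        (fun S => mid0 n hn ∉ S) ↔
      SparseS S ∧ S.image (irev n) = S ∧ mid0 n hn ∉ S := by
  simp only [Finset.mem_filter, sparseF, Finset.mem_univ, true_and]
  tauto

lemma mem_sB (hn : 4 ≤ n) {S : Finset (Fin (n-1))} :
    S ∈ ((sparseF (n-1)).filter (fun S => S.image (irev n) = S)).filter
        (fun S => mid0 n hn ∈ S) ↔
      SparseS S ∧ S.image (irev n) = S ∧ mid0 n hn ∈ S := by
  simp only [Finset.mem_filter, sparseF, Finset.mem_univ, true_and]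
  tauto

lemma sumA (hn : 4 ≤ n) (hev : n % 2 = 0) (g : ℕ → WRing) :
    ∑ S ∈ ((sparseF (n-1)).filter (fun S => S.image (irev n) = S)).filter
        (fun S => mid0 n hn ∉ S), g S.card =
      ∑ T ∈ sparseF (n/2 - 1), g (2 * T.card) := by
  refine Finset.sum_nbij' (PsiA n) (PhiA n) ?_ ?_ ?_ ?_ ?_
  -- hi : PsiA maps into sparseF
  · intro S hS
    obtain ⟨hsp, hsym, hmid⟩ := (mem_sA hn).mp hS
    rw [mem_sparseF]
    intro i hi j hj
    obtain ⟨a, ha, halt, hia⟩ := mem_PsiA.mp hi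
    obtain ⟨b, hb, hblt, hjb⟩ := mem_PsiA.mp hj
    have := hsp a ha b hb
    omega
  -- hj : PhiA maps into sA
  · intro T hT
    have hsp := mem_sparseF.mp hT
    rw [mem_sA hn]
    refine ⟨?_, ?_, ?_⟩
    · intro i hi j hj
      obtain ⟨a, ha, hia⟩ := mem_PhiA.mp hi
      obtain ⟨b, hb, hjb⟩ := mem_PhiA.mp hj
      have h1 := hsp a ha b hb
      have h2 := hsp b hb a ha
      have hab := a.isLt
      have hbb := b.isLt
      omega
    · ext j
      rw [Finset.mem_image]
      constructor
      · rintro ⟨j', hj', rfl⟩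
        obtain ⟨a, ha, hcase⟩ := mem_PhiA.mp hj'
        have hav := a.isLt
        have hjv := j'.isLt
        rw [mem_PhiA]
        rcases hcase with h | h
        · exact ⟨a, ha, Or.inr (by rw [val_irev]; omega)⟩
        · exact ⟨a, ha, Or.inl (by rw [val_irev]; omega)⟩
      · intro hj
        refine ⟨irev n j, ?_, irev_invol j⟩
        obtain ⟨a, ha, hcase⟩ := mem_PhiA.mp hj
        have hav := a.isLt
        have hjv := j.isLt
        rw [mem_PhiA]
        rcases hcase with h | h
        · exact ⟨a, ha, Or.inr (by rw [val_irev]; omega)⟩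
        · exact ⟨a, ha, Or.inl (by rw [val_irev]; omega)⟩
    · intro hmem
      obtain ⟨a, ha, hcase⟩ := mem_PhiA.mp hmem
      have hav := a.isLt
      have : (mid0 n hn : ℕ) = n/2 - 1 := rfl
      omega
  -- left inverse : PhiA (PsiA S) = S
  · intro S hS
    obtain ⟨hsp, hsym, hmid⟩ := (mem_sA hn).mp hS
    ext j
    rw [mem_PhiA]
    constructor
    · rintro ⟨i, hi, hcase⟩
      obtain ⟨a, ha, halt, hval⟩ := mem_PsiA.mp hi
      have hav := a.isLt
      have hjv := j.isLt
      rcases hcase with h | h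
      · have : j = a := Fin.ext (by omega)
        rwa [this]
      · have : j = irev n a := Fin.ext (by rw [val_irev]; omega)
        rw [this]
        exact mem_of_sym hsym ha
    · intro hj
      have hjmid : (j:ℕ) ≠ n/2 - 1 := by
        intro h
        exact hmid (by rwa [show mid0 n hn = j from Fin.ext h.symm])
      have hjv := j.isLt
      by_cases hlt : (j:ℕ) < n/2 - 1
      · exact ⟨⟨j.val, hlt⟩, mem_PsiA.mpr ⟨j, hj, hlt, rfl⟩, Or.inl rfl⟩
      · have hge : n/2 ≤ (j:ℕ) := by omega
        have hlow : ((irev n j : Fin (n-1)) : ℕ) < n/2 - 1 := by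
          rw [val_irev]; omega
        refine ⟨⟨(irev n j).val, hlow⟩,
          mem_PsiA.mpr ⟨irev n j, mem_of_sym hsym hj, hlow, rfl⟩, Or.inr ?_⟩
        simp only [val_irev]
        omega
  -- right inverse : PsiA (PhiA T) = T
  · intro T hT
    ext i
    rw [mem_PsiA]
    constructor
    · rintro ⟨a, ha, halt, hval⟩
      obtain ⟨b, hb, hcase⟩ := mem_PhiA.mp ha
      have hbb := b.isLt
      rcases hcase with h | h
      · have : i = b := Fin.ext (by omega)
        rwa [this]
      · omega
    · intro hi
      exact ⟨upL n i, mem_PhiA.mpr ⟨i, hi, Or.inl rfl⟩, i.isLt, rfl⟩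
  -- cardinalities
  · intro S hS
    obtain ⟨hsp, hsym, hmid⟩ := (mem_sA hn).mp hS
    have hcard : S.card = 2 * (PsiA n S).card := by
      rw [card_PsiA]
      have hsplit := Finset.card_filter_add_card_filter_not
        (s := S) (p := fun a => a.val < n/2 - 1)
      have himg : S.filter (fun a => ¬ a.val < n/2 - 1) =
          (S.filter (fun a => a.val < n/2 - 1)).image (irev n) := by
        ext j
        rw [Finset.mem_filter, Finset.mem_image]
        constructor
        · rintro ⟨hjS, hnlt⟩
          have hjv := j.isLt
          have hjmid : (j:ℕ) ≠ n/2 - 1 := by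
            intro h
            exact hmid (by rwa [show mid0 n hn = j from Fin.ext h.symm])
          refine ⟨irev n j, Finset.mem_filter.mpr ⟨mem_of_sym hsym hjS, ?_⟩, irev_invol j⟩
          rw [val_irev]; omega
        · rintro ⟨a, haf, rfl⟩
          obtain ⟨haS, halt⟩ := Finset.mem_filter.mp haf
          have hav := a.isLt
          refine ⟨mem_of_sym hsym haS, ?_⟩
          rw [val_irev]; omega
      rw [himg, Finset.card_image_of_injective _ irev_inj] at hsplit
      omega
    rw [hcard]

end BijA
section BijB

variable {n : ℕ}

lemma sumB (hn : 4 ≤ n) (hev : n % 2 = 0) (g : ℕ → WRing) :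
    ∑ S ∈ ((sparseF (n-1)).filter (fun S => S.image (irev n) = S)).filter
        (fun S => mid0 n hn ∈ S), g S.card =
      ∑ T ∈ sparseF ((n-2)/2 - 1), g (2 * T.card + 1) := by
  have hmid0 : (mid0 n hn : ℕ) = n/2 - 1 := rfl
  refine Finset.sum_nbij' (PsiB n) (PhiB n hn) ?_ ?_ ?_ ?_ ?_
  -- hi
  · intro S hS
    obtain ⟨hsp, hsym, hmid⟩ := (mem_sB hn).mp hS
    rw [mem_sparseF]
    intro i hi j hj
    obtain ⟨a, ha, halt, hia⟩ := mem_PsiB.mp hi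
    obtain ⟨b, hb, hblt, hjb⟩ := mem_PsiB.mp hj
    have := hsp a ha b hb
    omega
  -- hj
  · intro T hT
    have hsp := mem_sparseF.mp hT
    rw [mem_sB hn]
    refine ⟨?_, ?_, ?_⟩
    · intro i hi j hj
      rcases (mem_PhiB hn).mp hi with hmi | ⟨a, ha, hia⟩ <;>
        rcases (mem_PhiB hn).mp hj with hmj | ⟨b, hb, hjb⟩
      · omega
      · have hbb := b.isLt; omega
      · have hab := a.isLt; omega
      · have h1 := hsp a ha b hb
        have h2 := hsp b hb a ha
        have hab := a.isLt
        have hbb := b.isLt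
        omega
    · ext j
      rw [Finset.mem_image]
      constructor
      · rintro ⟨j', hj', rfl⟩
        rw [mem_PhiB hn]
        have hjv := j'.isLt
        rcases (mem_PhiB hn).mp hj' with hm | ⟨a, ha, hcase⟩
        · left; rw [val_irev]; omega
        · have hav := a.isLt
          rcases hcase with h | h
          · exact Or.inr ⟨a, ha, Or.inr (by rw [val_irev]; omega)⟩
          · exact Or.inr ⟨a, ha, Or.inl (by rw [val_irev]; omega)⟩
      · intro hj
        refine ⟨irev n j, ?_, irev_invol j⟩
        rw [mem_PhiB hn]
        have hjv := j.isLt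
        rcases (mem_PhiB hn).mp hj with hm | ⟨a, ha, hcase⟩
        · left; rw [val_irev]; omega
        · have hav := a.isLt
          rcases hcase with h | h
          · exact Or.inr ⟨a, ha, Or.inr (by rw [val_irev]; omega)⟩
          · exact Or.inr ⟨a, ha, Or.inl (by rw [val_irev]; omega)⟩
    · exact (mem_PhiB hn).mpr (Or.inl hmid0)
  -- left inverse
  · intro S hS
    obtain ⟨hsp, hsym, hmid⟩ := (mem_sB hn).mp hS
    ext j
    rw [mem_PhiB hn]
    constructor
    · rintro (hm | ⟨i, hi, hcase⟩)
      · rwa [show j = mid0 n hn from Fin.ext (by omega)]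
      · obtain ⟨a, ha, halt, hval⟩ := mem_PsiB.mp hi
        have hav := a.isLt
        have hjv := j.isLt
        rcases hcase with h | h
        · have : j = a := Fin.ext (by omega)
          rwa [this]
        · have : j = irev n a := Fin.ext (by rw [val_irev]; omega)
          rw [this]
          exact mem_of_sym hsym ha
    · intro hj
      by_cases hjm : (j:ℕ) = n/2 - 1
      · exact Or.inl hjm
      · have h1 := hsp j hj (mid0 n hn) hmid
        have h2 := hsp (mid0 n hn) hmid j hj
        have hjv := j.isLt
        by_cases hlt : (j:ℕ) < (n-2)/2 - 1
        · exact Or.inr ⟨⟨j.val, hlt⟩, mem_PsiB.mpr ⟨j, hj, hlt, rfl⟩, Or.inl rfl⟩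
        · have hge : n/2 + 1 ≤ (j:ℕ) := by omega
          have hlow : ((irev n j : Fin (n-1)) : ℕ) < (n-2)/2 - 1 := by
            rw [val_irev]; omega
          refine Or.inr ⟨⟨(irev n j).val, hlow⟩,
            mem_PsiB.mpr ⟨irev n j, mem_of_sym hsym hj, hlow, rfl⟩, Or.inr ?_⟩
          simp only [val_irev]
          omega
  -- right inverse
  · intro T hT
    ext i
    rw [mem_PsiB]
    constructor
    · rintro ⟨a, ha, halt, hval⟩
      have hii := i.isLt
      rcases (mem_PhiB hn).mp ha with hm | ⟨b, hb, hcase⟩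
      · omega
      · have hbb := b.isLt
        rcases hcase with h | h
        · have : i = b := Fin.ext (by omega)
          rwa [this]
        · omega
    · intro hi
      have hii := i.isLt
      exact ⟨upL2 n i, (mem_PhiB hn).mpr (Or.inr ⟨i, hi, Or.inl rfl⟩),
        by simp only [upL2]; omega, rfl⟩
  -- cardinalities
  · intro S hS
    obtain ⟨hsp, hsym, hmid⟩ := (mem_sB hn).mp hS
    have hcard : S.card = 2 * (PsiB n S).card + 1 := by
      rw [card_PsiB]
      have hsplit := Finset.card_filter_add_card_filter_not
        (s := S) (p := fun a => a.val < (n-2)/2 - 1)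
      have himg : S.filter (fun a => ¬ a.val < (n-2)/2 - 1) =
          insert (mid0 n hn) ((S.filter (fun a => a.val < (n-2)/2 - 1)).image (irev n)) := by
        ext j
        rw [Finset.mem_filter, Finset.mem_insert, Finset.mem_image]
        constructor
        · rintro ⟨hjS, hnlt⟩
          have hjv := j.isLt
          by_cases hjm : (j:ℕ) = n/2 - 1
          · exact Or.inl (Fin.ext (by omega))
          · have h1 := hsp j hjS (mid0 n hn) hmid
            have h2 := hsp (mid0 n hn) hmid j hjS
            refine Or.inr ⟨irev n j, Finset.mem_filter.mpr ⟨mem_of_sym hsym hjS, ?_⟩,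
              irev_invol j⟩
            rw [val_irev]; omega
        · rintro (rfl | ⟨a, haf, rfl⟩)
          · exact ⟨hmid, by omega⟩
          · obtain ⟨haS, halt⟩ := Finset.mem_filter.mp haf
            have hav := a.isLt
            refine ⟨mem_of_sym hsym haS, ?_⟩
            rw [val_irev]; omega
      have hnotmem : mid0 n hn ∉
          (S.filter (fun a => a.val < (n-2)/2 - 1)).image (irev n) := by
        rw [Finset.mem_image]
        rintro ⟨a, haf, hae⟩
        obtain ⟨-, halt⟩ := Finset.mem_filter.mp haf
        have hav := a.isLt
        have := congrArg Fin.val hae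
        rw [val_irev] at this
        omega
      rw [himg, Finset.card_insert_of_notMem hnotmem,
        Finset.card_image_of_injective _ irev_inj] at hsplit
      omega
    rw [hcard]

end BijB
section Assemble

variable {n : ℕ}

lemma mid0_mem_image_iff (hn : 4 ≤ n) {S : Finset (Fin (n-1))} :
    midE n hn ∈ S.image (pedge n) ↔ mid0 n hn ∈ S :=
  mid_mem_image_iff hn

lemma term_mem (hn : 4 ≤ n) (hev : n % 2 = 0) {S : Finset (Fin (n-1))}
    (hsp : SparseS S) (hmid : mid0 n hn ∈ S) :
    wM (pathG n) (S.image (pedge n)) (Fin.revPerm : Equiv.Perm (Fin n)) =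
      va 2 ^ (n/2) * vb 2 ^ ((S.card - 1)/2) * vc 1 *
        vbeta 2 ^ (((n-1) - S.card)/2) := by
  have hμ : S.image (pedge n) ∈ matchings (pathG n) := image_pedge_matching.mpr hsp
  have hmid' : midE n hn ∈ S.image (pedge n) := (mid0_mem_image_iff hn).mpr hmid
  rw [wM_rev hn hev hμ, if_pos hmid', Finset.card_erase_of_mem hmid', card_image_pedge]
  have hnm : midE n hn ∉ eFin (pathG n) \ S.image (pedge n) := by
    rw [Finset.mem_sdiff]
    tauto
  rw [Finset.erase_eq_of_notMem hnm, Finset.card_sdiff_of_subset (matchings_sub hμ),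
    card_eFin_pathG, card_image_pedge, if_pos hmid', pow_one, pow_zero, mul_one]

lemma term_notmem (hn : 4 ≤ n) (hev : n % 2 = 0) {S : Finset (Fin (n-1))}
    (hsp : SparseS S) (hmid : mid0 n hn ∉ S) :
    wM (pathG n) (S.image (pedge n)) (Fin.revPerm : Equiv.Perm (Fin n)) =
      va 2 ^ (n/2) * vb 2 ^ (S.card/2) *
        vbeta 2 ^ (((n-1) - S.card - 1)/2) * vgamma 1 := by
  have hμ : S.image (pedge n) ∈ matchings (pathG n) := image_pedge_matching.mpr hsp
  have hmid' : midE n hn ∉ S.image (pedge n) := fun h => hmid ((mid0_mem_image_iff hn).mp h)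
  rw [wM_rev hn hev hμ, if_neg hmid', Finset.erase_eq_of_notMem hmid', card_image_pedge]
  have hm : midE n hn ∈ eFin (pathG n) \ S.image (pedge n) :=
    Finset.mem_sdiff.mpr ⟨midE_mem_eFin hn, hmid'⟩
  rw [Finset.card_erase_of_mem hm, Finset.card_sdiff_of_subset (matchings_sub hμ),
    card_eFin_pathG, card_image_pedge, if_neg hmid', pow_one, pow_zero, mul_one]

lemma sum_rev_part (hn : 4 ≤ n) (hev : n % 2 = 0) :
    ∑ μ ∈ fixedMatchings (pathG n) (Fin.revPerm : Equiv.Perm (Fin n)),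
        wM (pathG n) μ (Fin.revPerm : Equiv.Perm (Fin n)) =
      va 2 ^ (n / 2) *
        (vgamma 1 * Upoly (n / 2) (vb 2) (vbeta 2) +
          vc 1 * vbeta 2 * Upoly ((n - 2) / 2) (vb 2) (vbeta 2)) := by
  rw [fixedMatchings_rev_eq]
  rw [Finset.sum_image (fun S _ T _ h => Finset.image_injective pedge_inj h)]
  rw [← Finset.sum_filter_add_sum_filter_not
    ((sparseF (n-1)).filter (fun S => S.image (irev n) = S)) (fun S => mid0 n hn ∈ S)]
  have hBsum : ∑ S ∈ ((sparseF (n-1)).filter (fun S => S.image (irev n) = S)).filter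
      (fun S => mid0 n hn ∈ S), wM (pathG n) (S.image (pedge n)) Fin.revPerm =
      va 2 ^ (n/2) * (vc 1 * vbeta 2 * Upoly ((n-2)/2) (vb 2) (vbeta 2)) := by
    have step1 : ∑ S ∈ ((sparseF (n-1)).filter (fun S => S.image (irev n) = S)).filter
        (fun S => mid0 n hn ∈ S), wM (pathG n) (S.image (pedge n)) Fin.revPerm =
        ∑ S ∈ ((sparseF (n-1)).filter (fun S => S.image (irev n) = S)).filter
        (fun S => mid0 n hn ∈ S), (fun t => va 2 ^ (n/2) * vb 2 ^ ((t - 1)/2) * vc 1 *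
          vbeta 2 ^ (((n-1) - t)/2)) S.card := by
      apply Finset.sum_congr rfl
      intro S hS
      obtain ⟨hsp, -, hmid⟩ := (mem_sB hn).mp hS
      exact term_mem hn hev hsp hmid
    rw [step1, sumB hn hev (fun t => va 2 ^ (n/2) * vb 2 ^ ((t - 1)/2) * vc 1 *
      vbeta 2 ^ (((n-1) - t)/2))]
    rw [Upoly_eq_index_sum, Finset.mul_sum, Finset.mul_sum]
    apply Finset.sum_congr rfl
    intro T hT
    have ht : T.card ≤ (n-2)/2 - 1 :=
      le_trans (Finset.card_le_univ T) (by simp)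
    have e1 : (2 * T.card + 1 - 1)/2 = T.card := by omega
    have e2 : ((n-1) - (2 * T.card + 1))/2 = (((n-2)/2 - 1) - T.card) + 1 := by omega
    rw [e1, e2, pow_succ]
    ring
  have hAsum : ∑ S ∈ ((sparseF (n-1)).filter (fun S => S.image (irev n) = S)).filter
      (fun S => ¬ mid0 n hn ∈ S), wM (pathG n) (S.image (pedge n)) Fin.revPerm =
      va 2 ^ (n/2) * (vgamma 1 * Upoly (n/2) (vb 2) (vbeta 2)) := by
    have step1 : ∑ S ∈ ((sparseF (n-1)).filter (fun S => S.image (irev n) = S)).filter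
        (fun S => mid0 n hn ∉ S), wM (pathG n) (S.image (pedge n)) Fin.revPerm =
        ∑ S ∈ ((sparseF (n-1)).filter (fun S => S.image (irev n) = S)).filter
        (fun S => mid0 n hn ∉ S), (fun t => va 2 ^ (n/2) * vb 2 ^ (t/2) *
          vbeta 2 ^ (((n-1) - t - 1)/2) * vgamma 1) S.card := by
      apply Finset.sum_congr rfl
      intro S hS
      obtain ⟨hsp, -, hmid⟩ := (mem_sA hn).mp hS
      exact term_notmem hn hev hsp hmid
    rw [step1, sumA hn hev (fun t => va 2 ^ (n/2) * vb 2 ^ (t/2) *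
      vbeta 2 ^ (((n-1) - t - 1)/2) * vgamma 1)]
    rw [Upoly_eq_index_sum, Finset.mul_sum, Finset.mul_sum]
    apply Finset.sum_congr rfl
    intro T hT
    have ht : T.card ≤ n/2 - 1 :=
      le_trans (Finset.card_le_univ T) (by simp)
    have e1 : (2 * T.card)/2 = T.card := by omega
    have e2 : ((n-1) - 2 * T.card - 1)/2 = (n/2 - 1) - T.card := by omega
    rw [e1, e2]
    ring
  rw [hBsum, hAsum]
  ring

end Assemble

/-- the extended Walsh series of matched paths `P_n`, `n` even, `n ≥ 4`. -/
theorem walsh_matched_path_even (n : ℕ) (hn : 4 ≤ n) (heven : Even n) :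
    ∑ σ ∈ autF (pathG n), ∑ μ ∈ fixedMatchings (pathG n) σ, wM (pathG n) μ σ =
      va 1 ^ n * Upoly n (vb 1) (vbeta 1) +
        va 2 ^ (n / 2) *
          (vgamma 1 * Upoly (n / 2) (vb 2) (vbeta 2) +
            vc 1 * vbeta 2 * Upoly ((n - 2) / 2) (vb 2) (vbeta 2)) := by
  have hev : n % 2 = 0 := Nat.even_iff.mp heven
  have hne : (1 : Equiv.Perm (Fin n)) ≠ Fin.revPerm := by
    intro h
    have := congrArg (fun σ : Equiv.Perm (Fin n) => ((σ ⟨0, by omega⟩ : Fin n) : ℕ)) h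
    simp [Fin.val_rev] at this
    omega
  rw [autF_pathG (by omega), Finset.sum_pair hne, sum_one_part, sum_rev_part hn hev]
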